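/- arXiv:1703.06463 — 3 statements merged into one kernel-verified Lean document; each statement's English description precedes it below -/
import Mathlib

section
/- Let s, n ≥ 1, let G be a real symmetric s×s matrix with λ_min(G) < 0, let M̃ be a real symmetric positive definite n×n matrix, let Ã be a real symmetric positive semidefinite n×n matrix, and let Δt ≥ 0. Then λ_min(I_s ⊗ M̃ + Δt·(G ⊗ Ã)) ≥ λ_min(M̃) + Δt · λ_min(G) · λ_max(Ã). In particular, if λ_min(M̃) + Δt · λ_min(G) · λ_max(Ã) > 0, then I_s ⊗ M̃ + Δt·(G ⊗ Ã) is symmetric positive definite. -/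
open Matrix Kronecker

/-- The smallest eigenvalue of a (symmetric) real matrix, as the infimum of its spectrum. -/
noncomputable def lamMin {m : Type*} [Fintype m] [DecidableEq m] (A : Matrix m m ℝ) : ℝ :=
  sInf (spectrum ℝ A)

/-- The largest eigenvalue of a (symmetric) real matrix, as the supremum of its spectrum. -/
noncomputable def lamMax {m : Type*} [Fintype m] [DecidableEq m] (A : Matrix m m ℝ) : ℝ :=
  sSup (spectrum ℝ A)

/-- The largest singular value of a real square matrix. -/
noncomputable def sigmaMax {m : Type*} [Fintype m] [DecidableEq m] (B : Matrix m m ℝ) : ℝ :=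
  Real.sqrt (lamMax (Bᵀ * B))

/-- `P^{-1/2}`: the inverse of the unique symmetric positive definite square root of `P`. -/
noncomputable def Matrix.PosDef.invSqrt {m : Type*} [Fintype m] [DecidableEq m]
    {P : Matrix m m ℝ} (hP : P.PosDef) : Matrix m m ℝ :=
  (hP.posSemidef.1.eigenvectorUnitary.1 *
    diagonal ((↑) ∘ (Real.sqrt ·) ∘ hP.posSemidef.1.eigenvalues) *
    (star hP.posSemidef.1.eigenvectorUnitary : Matrix m m ℝ))⁻¹

/-- The modified condition number `κ̃(B) = σ_max(B) / λ_min((B + Bᵀ)/2)`. -/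
noncomputable def ktilde {m : Type*} [Fintype m] [DecidableEq m] (B : Matrix m m ℝ) : ℝ :=
  sigmaMax B / lamMin ((1 / 2 : ℝ) • (B + Bᵀ))

section Aux

variable {m : Type*} [Fintype m] [DecidableEq m]

lemma lamMin_le_eig {S : Matrix m m ℝ} (hS : S.IsHermitian) (i : m) :
    lamMin S ≤ hS.eigenvalues i := by
  apply csInf_le (Matrix.finite_real_spectrum.bddBelow)
  exact hS.eigenvalues_mem_spectrum_real i

lemma eig_le_lamMax {S : Matrix m m ℝ} (hS : S.IsHermitian) (i : m) :
    hS.eigenvalues i ≤ lamMax S := by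
  apply le_csSup (Matrix.finite_real_spectrum.bddAbove)
  exact hS.eigenvalues_mem_spectrum_real i

lemma conj_diag_eq_sub {S : Matrix m m ℝ} (hS : S.IsHermitian) (c : ℝ) :
    (hS.eigenvectorUnitary : Matrix m m ℝ) * diagonal (fun i => hS.eigenvalues i - c) *
      (star (hS.eigenvectorUnitary : Matrix m m ℝ)) = S - c • 1 := by
  have hU : (hS.eigenvectorUnitary : Matrix m m ℝ) *
      (star (hS.eigenvectorUnitary : Matrix m m ℝ)) = 1 :=
    (Matrix.mem_unitaryGroup_iff).mp (hS.eigenvectorUnitary).2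
  have hd : diagonal (fun i => hS.eigenvalues i - c)
      = diagonal (RCLike.ofReal ∘ hS.eigenvalues) - c • (1 : Matrix m m ℝ) := by
    rw [smul_one_eq_diagonal, ← diagonal_sub]
    rfl
  rw [hd, Matrix.mul_sub, Matrix.sub_mul, Matrix.mul_smul, Matrix.mul_one, Matrix.smul_mul,
    hU, ← Unitary.conjStarAlgAut_apply (S := ℝ), ← hS.spectral_theorem]

lemma sub_smul_one_posSemidef {S : Matrix m m ℝ} (hS : S.IsHermitian) {c : ℝ}
    (h : ∀ i, c ≤ hS.eigenvalues i) : (S - c • 1).PosSemidef := by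
  rw [← conj_diag_eq_sub hS c]
  exact (Matrix.PosSemidef.diagonal (fun i => sub_nonneg.2 (h i))).mul_mul_conjTranspose_same _

lemma smul_one_sub_posSemidef {S : Matrix m m ℝ} (hS : S.IsHermitian) {c : ℝ}
    (h : ∀ i, hS.eigenvalues i ≤ c) : (c • 1 - S).PosSemidef := by
  have h0 : c • (1 : Matrix m m ℝ) - S = -(S - c • 1) := (neg_sub _ _).symm
  rw [h0, ← conj_diag_eq_sub hS c]
  have h1 : -((hS.eigenvectorUnitary : Matrix m m ℝ) * diagonal (fun i => hS.eigenvalues i - c) *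
      (star (hS.eigenvectorUnitary : Matrix m m ℝ)))
    = (hS.eigenvectorUnitary : Matrix m m ℝ) * diagonal (fun i => c - hS.eigenvalues i) *
      (star (hS.eigenvectorUnitary : Matrix m m ℝ)) := by
    rw [← Matrix.neg_mul, ← Matrix.mul_neg]
    congr 2
    ext i j
    by_cases h : i = j <;> simp [Matrix.diagonal_apply, h] <;> ring
  rw [h1]
  exact (Matrix.PosSemidef.diagonal (fun i => sub_nonneg.2 (h i))).mul_mul_conjTranspose_same _

lemma le_lamMin_of_psd [Nonempty m] {S : Matrix m m ℝ} (hS : S.IsHermitian) {c : ℝ}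
    (h : (S - c • 1).PosSemidef) : c ≤ lamMin S := by
  unfold lamMin
  rw [hS.spectrum_eq_image_range, RCLike.ofReal_real_eq_id, Set.image_id]
  apply le_csInf (Set.range_nonempty _)
  rintro x ⟨i, rfl⟩
  set v : m → ℝ := ⇑(hS.eigenvectorBasis i) with hv
  have hv1 : star v ⬝ᵥ v = 1 := by
    have hn := hS.eigenvectorBasis.orthonormal.1 i
    have h2 : (inner ℝ (hS.eigenvectorBasis i) (hS.eigenvectorBasis i) : ℝ) = 1 := by
      rw [real_inner_self_eq_norm_sq, hn]; norm_num
    simp only [PiLp.inner_apply, RCLike.inner_apply, conj_trivial] at h2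
    simpa [dotProduct, hv] using h2
  have h2 := h.dotProduct_mulVec_nonneg v
  have hmv : (S - c • 1) *ᵥ v = (hS.eigenvalues i - c) • v := by
    rw [Matrix.sub_mulVec, Matrix.smul_mulVec, Matrix.one_mulVec,
      hS.mulVec_eigenvectorBasis, sub_smul]
  rw [hmv, dotProduct_smul, hv1, smul_eq_mul, mul_one, sub_nonneg] at h2
  exact h2

lemma kronecker_psd {a b : Type*} [Fintype a] [DecidableEq a] [Fintype b] [DecidableEq b]
    {A : Matrix a a ℝ} {B : Matrix b b ℝ} (hA : A.PosSemidef) (hB : B.PosSemidef) :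
    (A ⊗ₖ B).PosSemidef := by
  exact hA.kronecker hB

lemma psd_smul {A : Matrix m m ℝ} (hA : A.PosSemidef) {c : ℝ} (hc : 0 ≤ c) :
    (c • A).PosSemidef := by
  refine .of_dotProduct_mulVec_nonneg ?_ (fun x => ?_)
  · unfold Matrix.IsHermitian
    rw [Matrix.conjTranspose_smul, star_trivial, hA.1.eq]
  · rw [Matrix.smul_mulVec, dotProduct_smul, smul_eq_mul]
    exact mul_nonneg hc (hA.dotProduct_mulVec_nonneg x)

lemma kronecker_herm {a b : Type*} [Fintype a] [DecidableEq a] [Fintype b] [DecidableEq b]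
    {A : Matrix a a ℝ} {B : Matrix b b ℝ} (hA : A.IsHermitian) (hB : B.IsHermitian) :
    (A ⊗ₖ B).IsHermitian := by
  unfold Matrix.IsHermitian at *
  simp only [Matrix.conjTranspose_eq_transpose_of_trivial] at *
  rw [← Matrix.kroneckerMap_transpose, hA, hB]

lemma kronecker_sub {a b : Type*} [Fintype a] [Fintype b]
    (A : Matrix a a ℝ) (B C : Matrix b b ℝ) : A ⊗ₖ (B - C) = A ⊗ₖ B - A ⊗ₖ C := by
  ext i j; simp [mul_sub]

lemma sub_kronecker {a b : Type*} [Fintype a] [Fintype b]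
    (A B : Matrix a a ℝ) (C : Matrix b b ℝ) : (A - B) ⊗ₖ C = A ⊗ₖ C - B ⊗ₖ C := by
  ext i j; simp [sub_mul]

end Aux

theorem stmt2 (s n : ℕ) (hs : 1 ≤ s) (hn : 1 ≤ n)
    (G : Matrix (Fin s) (Fin s) ℝ) (hG : G.IsHermitian) (hGmin : lamMin G < 0)
    (Mt At : Matrix (Fin n) (Fin n) ℝ)
    (hM : Mt.PosDef) (hA : At.PosSemidef)
    (Δt : ℝ) (hΔt : 0 ≤ Δt) :
    lamMin Mt + Δt * lamMin G * lamMax At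
        ≤ lamMin ((1 : Matrix (Fin s) (Fin s) ℝ) ⊗ₖ Mt + Δt • (G ⊗ₖ At)) ∧
    (0 < lamMin Mt + Δt * lamMin G * lamMax At →
      ((1 : Matrix (Fin s) (Fin s) ℝ) ⊗ₖ Mt + Δt • (G ⊗ₖ At)).PosDef) := by
  haveI : NeZero s := ⟨Nat.one_le_iff_ne_zero.mp hs⟩
  haveI : NeZero n := ⟨Nat.one_le_iff_ne_zero.mp hn⟩
  set c : ℝ := lamMin Mt + Δt * lamMin G * lamMax At with hc
  set S : Matrix (Fin s × Fin n) (Fin s × Fin n) ℝ :=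
    (1 : Matrix (Fin s) (Fin s) ℝ) ⊗ₖ Mt + Δt • (G ⊗ₖ At) with hS
  have hSherm : S.IsHermitian := by
    refine (kronecker_herm Matrix.isHermitian_one hM.1).add ?_
    have := kronecker_herm hG hA.1
    unfold Matrix.IsHermitian at this ⊢
    rw [Matrix.conjTranspose_smul, star_trivial, this]
  -- key decomposition
  have hKey : S - c • 1 =
      (1 : Matrix (Fin s) (Fin s) ℝ) ⊗ₖ (Mt - lamMin Mt • 1)
      + (Δt • ((G - lamMin G • 1) ⊗ₖ At)
        + (Δt * (-lamMin G)) • ((1 : Matrix (Fin s) (Fin s) ℝ) ⊗ₖ (lamMax At • 1 - At))) := by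
    rw [hS, kronecker_sub, sub_kronecker, kronecker_sub,
      Matrix.kronecker_smul, Matrix.smul_kronecker, Matrix.kronecker_smul,
      Matrix.one_kronecker_one]
    module
  have hPSD : (S - c • 1).PosSemidef := by
    rw [hKey]
    refine (kronecker_psd Matrix.PosSemidef.one
      (sub_smul_one_posSemidef hM.1 (lamMin_le_eig hM.1))).add ?_
    refine (psd_smul (kronecker_psd
      (sub_smul_one_posSemidef hG (lamMin_le_eig hG)) hA) hΔt).add ?_
    refine psd_smul (kronecker_psd Matrix.PosSemidef.one
      (smul_one_sub_posSemidef hA.1 (eig_le_lamMax hA.1))) ?_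
    exact mul_nonneg hΔt (neg_nonneg.2 hGmin.le)
  constructor
  · exact le_lamMin_of_psd hSherm hPSD
  · intro hcpos
    have h1 : (c • (1 : Matrix (Fin s × Fin n) (Fin s × Fin n) ℝ)).PosDef := by
      rw [smul_one_eq_diagonal]
      exact Matrix.posDef_diagonal_iff.mpr fun _ => hcpos
    have := h1.add_posSemidef hPSD
    rwa [add_sub_cancel] at this
end

section
/- Let s, n ≥ 1, let Γ be a real s×s matrix such that λ_min((Γ + Γᵀ)/2) ≥ 0, let M be a real symmetric positive definite n×n matrix, let A be a real symmetric positive semidefinite n×n matrix, let P be a real symmetric positive definite n×n matrix, and let Δt ≥ 0. Set 𝔹 = (I_s ⊗ P^{-1/2})(I_s ⊗ M + Δt·(Γ ⊗ A))(I_s ⊗ P^{-1/2}). Then the symmetric part (𝔹 + 𝔹ᵀ)/2 is positive definite and κ̃(𝔹) ≤ (λ_max(P^{-1/2} M P^{-1/2}) + Δt · σ_max(Γ) · λ_max(P^{-1/2} A P^{-1/2})) / (λ_min(P^{-1/2} M P^{-1/2}) + Δt · λ_min((Γ + Γᵀ)/2) · λ_min(P^{-1/2} A P^{-1/2})). -/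
open Matrix Kronecker

section Helpers
set_option linter.unusedSectionVars false

variable {m : Type*} [Fintype m] [DecidableEq m]

noncomputable def psdSqrt {X : Matrix m m ℝ} (hX : X.PosSemidef) : Matrix m m ℝ :=
  hX.1.eigenvectorUnitary.1 *
    diagonal ((↑) ∘ (Real.sqrt ·) ∘ hX.1.eigenvalues) *
    (star hX.1.eigenvectorUnitary : Matrix m m ℝ)

lemma psdSqrt_psd {X : Matrix m m ℝ} (hX : X.PosSemidef) : (psdSqrt hX).PosSemidef := by
  have hD : (diagonal ((↑) ∘ (Real.sqrt ·) ∘ hX.1.eigenvalues) : Matrix m m ℝ).PosSemidef :=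
    Matrix.PosSemidef.diagonal fun i => Real.sqrt_nonneg _
  have := hD.mul_mul_conjTranspose_same (hX.1.eigenvectorUnitary : Matrix m m ℝ)
  rw [← Matrix.star_eq_conjTranspose] at this
  exact this

lemma psdSqrt_mul_self {X : Matrix m m ℝ} (hX : X.PosSemidef) : psdSqrt hX * psdSqrt hX = X := by
  have hU : (star hX.1.eigenvectorUnitary : Matrix m m ℝ) * (hX.1.eigenvectorUnitary : Matrix m m ℝ)
      = 1 := Unitary.coe_star_mul_self _
  have h1 : psdSqrt hX * psdSqrt hX = (hX.1.eigenvectorUnitary : Matrix m m ℝ) *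
      (diagonal ((↑) ∘ (Real.sqrt ·) ∘ hX.1.eigenvalues) *
        ((star hX.1.eigenvectorUnitary : Matrix m m ℝ) * (hX.1.eigenvectorUnitary : Matrix m m ℝ)) *
        diagonal ((↑) ∘ (Real.sqrt ·) ∘ hX.1.eigenvalues)) *
      (star hX.1.eigenvectorUnitary : Matrix m m ℝ) := by
    simp only [psdSqrt, Matrix.mul_assoc]
  rw [h1, hU, Matrix.mul_one, diagonal_mul_diagonal]
  conv_rhs => rw [hX.1.spectral_theorem, Unitary.conjStarAlgAut_apply]
  congr 2
  congr 1
  funext i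
  simp [Real.mul_self_sqrt (hX.eigenvalues_nonneg i)]

lemma kron_conjTranspose {l : Type*} [Fintype l] [DecidableEq l]
    (C : Matrix l l ℝ) (D : Matrix m m ℝ) : (C ⊗ₖ D)ᴴ = Cᴴ ⊗ₖ Dᴴ := by
  ext ⟨i, j⟩ ⟨k, r⟩
  simp [conjTranspose_apply, kroneckerMap_apply]

lemma psd_kron {l : Type*} [Fintype l] [DecidableEq l]
    {X : Matrix l l ℝ} {Y : Matrix m m ℝ} (hX : X.PosSemidef) (hY : Y.PosSemidef) :
    (X ⊗ₖ Y).PosSemidef := by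
  exact hX.kronecker hY

lemma exists_eigenvector {A : Matrix m m ℝ} {μ : ℝ} (hμ : μ ∈ spectrum ℝ A) :
    ∃ v : m → ℝ, v ≠ 0 ∧ A *ᵥ v = μ • v := by
  have h1 : μ ∈ spectrum ℝ (Matrix.toLinAlgEquiv' A) := by
    rwa [AlgEquiv.spectrum_eq Matrix.toLinAlgEquiv' A]
  have h2 : Module.End.HasEigenvalue (Matrix.toLinAlgEquiv' A) μ :=
    Module.End.hasEigenvalue_iff_mem_spectrum.mpr h1
  obtain ⟨v, hv⟩ := h2.exists_hasEigenvector
  refine ⟨v, hv.2, ?_⟩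
  have := hv.apply_eq_smul
  rwa [Matrix.toLinAlgEquiv'_apply] at this

lemma spectrum_nonempty [Nonempty m] {A : Matrix m m ℝ} (hA : A.IsHermitian) :
    (spectrum ℝ A).Nonempty :=
  ⟨_, hA.eigenvalues_mem_spectrum_real (Classical.arbitrary m)⟩

lemma dot_self_pos {v : m → ℝ} (hv : v ≠ 0) : 0 < v ⬝ᵥ v := by
  have := Matrix.dotProduct_star_self_pos_iff (v := v) |>.mpr hv
  simpa using this

lemma le_lamMin {A : Matrix m m ℝ} (hne : (spectrum ℝ A).Nonempty) {c : ℝ}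
    (h : ∀ x : m → ℝ, c * (x ⬝ᵥ x) ≤ x ⬝ᵥ (A *ᵥ x)) : c ≤ lamMin A := by
  refine le_csInf hne fun μ hμ => ?_
  obtain ⟨v, hv0, hv⟩ := exists_eigenvector hμ
  have hp : 0 < v ⬝ᵥ v := dot_self_pos hv0
  have h2 := h v
  rw [hv, dotProduct_smul, smul_eq_mul] at h2
  exact le_of_mul_le_mul_right h2 hp

lemma lamMax_le {A : Matrix m m ℝ} (hne : (spectrum ℝ A).Nonempty) {c : ℝ}
    (h : ∀ x : m → ℝ, x ⬝ᵥ (A *ᵥ x) ≤ c * (x ⬝ᵥ x)) : lamMax A ≤ c := by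
  refine csSup_le hne fun μ hμ => ?_
  obtain ⟨v, hv0, hv⟩ := exists_eigenvector hμ
  have hp : 0 < v ⬝ᵥ v := dot_self_pos hv0
  have h2 := h v
  rw [hv, dotProduct_smul, smul_eq_mul] at h2
  exact le_of_mul_le_mul_right h2 hp

lemma lamMin_mem [Nonempty m] {A : Matrix m m ℝ} (hA : A.IsHermitian) :
    lamMin A ∈ spectrum ℝ A :=
  (spectrum_nonempty hA).csInf_mem A.finite_spectrum

lemma lamMax_mem [Nonempty m] {A : Matrix m m ℝ} (hA : A.IsHermitian) :
    lamMax A ∈ spectrum ℝ A :=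
  (spectrum_nonempty hA).csSup_mem A.finite_spectrum

lemma spec_pos {A : Matrix m m ℝ} (hA : A.PosDef) {μ : ℝ} (hμ : μ ∈ spectrum ℝ A) : 0 < μ := by
  obtain ⟨v, hv0, hv⟩ := exists_eigenvector hμ
  have h1 : 0 < v ⬝ᵥ (A *ᵥ v) := by simpa using hA.dotProduct_mulVec_pos hv0
  rw [hv, dotProduct_smul, smul_eq_mul] at h1
  have hp : 0 < v ⬝ᵥ v := dot_self_pos hv0
  nlinarith

lemma spec_nonneg {A : Matrix m m ℝ} (hA : A.PosSemidef) {μ : ℝ} (hμ : μ ∈ spectrum ℝ A) :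
    0 ≤ μ := by
  obtain ⟨v, hv0, hv⟩ := exists_eigenvector hμ
  have h1 : 0 ≤ v ⬝ᵥ (A *ᵥ v) := by simpa using hA.dotProduct_mulVec_nonneg v
  rw [hv, dotProduct_smul, smul_eq_mul] at h1
  have hp : 0 < v ⬝ᵥ v := dot_self_pos hv0
  nlinarith

lemma lamMin_pos [Nonempty m] {A : Matrix m m ℝ} (hA : A.PosDef) : 0 < lamMin A :=
  spec_pos hA (lamMin_mem hA.isHermitian)

lemma lamMin_nonneg [Nonempty m] {A : Matrix m m ℝ} (hA : A.PosSemidef) : 0 ≤ lamMin A :=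
  spec_nonneg hA (lamMin_mem hA.isHermitian)

lemma lamMax_nonneg [Nonempty m] {A : Matrix m m ℝ} (hA : A.PosSemidef) : 0 ≤ lamMax A :=
  spec_nonneg hA (lamMax_mem hA.isHermitian)

lemma conj_diag_psd {A : Matrix m m ℝ} (hA : A.IsHermitian) {c : ℝ}
    (h : ∀ i, c ≤ hA.eigenvalues i) : (A - c • 1).PosSemidef := by
  have hU : (hA.eigenvectorUnitary : Matrix m m ℝ) * star (hA.eigenvectorUnitary : Matrix m m ℝ)
      = 1 := Matrix.mem_unitaryGroup_iff.mp (hA.eigenvectorUnitary).2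
  have hD : (diagonal (fun i => hA.eigenvalues i - c)).PosSemidef :=
    Matrix.PosSemidef.diagonal fun i => sub_nonneg.mpr (h i)
  have key := hD.mul_mul_conjTranspose_same (hA.eigenvectorUnitary : Matrix m m ℝ)
  have hdd : diagonal (fun i => hA.eigenvalues i - c) = diagonal (hA.eigenvalues) - c • 1 := by
    rw [smul_one_eq_diagonal, ← diagonal_sub]
  have heq : A - c • 1 = (hA.eigenvectorUnitary : Matrix m m ℝ) *
      diagonal (fun i => hA.eigenvalues i - c) *
      (hA.eigenvectorUnitary : Matrix m m ℝ)ᴴ := by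
    have hs := hA.spectral_theorem
    rw [hdd, Matrix.mul_sub, Matrix.sub_mul, Matrix.mul_smul, Matrix.smul_mul, Matrix.mul_one,
      ← Matrix.star_eq_conjTranspose, hU]
    congr 1
  rw [heq]; exact key

lemma diag_conj_psd {A : Matrix m m ℝ} (hA : A.IsHermitian) {c : ℝ}
    (h : ∀ i, hA.eigenvalues i ≤ c) : (c • 1 - A).PosSemidef := by
  have hU : (hA.eigenvectorUnitary : Matrix m m ℝ) * star (hA.eigenvectorUnitary : Matrix m m ℝ)
      = 1 := Matrix.mem_unitaryGroup_iff.mp (hA.eigenvectorUnitary).2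
  have hD : (diagonal (fun i => c - hA.eigenvalues i)).PosSemidef :=
    Matrix.PosSemidef.diagonal fun i => sub_nonneg.mpr (h i)
  have key := hD.mul_mul_conjTranspose_same (hA.eigenvectorUnitary : Matrix m m ℝ)
  have hdd : diagonal (fun i => c - hA.eigenvalues i) = c • 1 - diagonal (hA.eigenvalues) := by
    rw [smul_one_eq_diagonal, ← diagonal_sub]
  have heq : c • 1 - A = (hA.eigenvectorUnitary : Matrix m m ℝ) *
      diagonal (fun i => c - hA.eigenvalues i) *
      (hA.eigenvectorUnitary : Matrix m m ℝ)ᴴ := by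
    have hs := hA.spectral_theorem
    rw [hdd, Matrix.mul_sub, Matrix.sub_mul, Matrix.mul_smul, Matrix.smul_mul, Matrix.mul_one,
      ← Matrix.star_eq_conjTranspose, hU]
    congr 1
  rw [heq]; exact key


lemma sub_lamMin_psd [Nonempty m] {A : Matrix m m ℝ} (hA : A.IsHermitian) :
    (A - lamMin A • 1).PosSemidef :=
  conj_diag_psd hA fun i =>
    csInf_le A.finite_spectrum.bddBelow (hA.eigenvalues_mem_spectrum_real i)

lemma lamMax_sub_psd [Nonempty m] {A : Matrix m m ℝ} (hA : A.IsHermitian) :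
    (lamMax A • 1 - A).PosSemidef :=
  diag_conj_psd hA fun i =>
    le_csSup A.finite_spectrum.bddAbove (hA.eigenvalues_mem_spectrum_real i)

lemma quad_le_of_psd {C : Matrix m m ℝ} {c : ℝ} (h : (c • 1 - C).PosSemidef) (x : m → ℝ) :
    x ⬝ᵥ (C *ᵥ x) ≤ c * (x ⬝ᵥ x) := by
  have h2 := h.dotProduct_mulVec_nonneg x
  rwa [star_trivial, sub_mulVec, smul_mulVec, one_mulVec, dotProduct_sub, dotProduct_smul,
    smul_eq_mul, sub_nonneg] at h2

lemma quad_ge_of_psd {C : Matrix m m ℝ} {c : ℝ} (h : (C - c • 1).PosSemidef) (x : m → ℝ) :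
    c * (x ⬝ᵥ x) ≤ x ⬝ᵥ (C *ᵥ x) := by
  have h2 := h.dotProduct_mulVec_nonneg x
  rwa [star_trivial, sub_mulVec, smul_mulVec, one_mulVec, dotProduct_sub, dotProduct_smul,
    smul_eq_mul, sub_nonneg] at h2

lemma lamMin_ge_of_psd {A : Matrix m m ℝ} {c : ℝ} (hne : (spectrum ℝ A).Nonempty)
    (h : (A - c • 1).PosSemidef) : c ≤ lamMin A :=
  le_lamMin hne (quad_ge_of_psd h)

lemma lamMax_le_of_psd {A : Matrix m m ℝ} {c : ℝ} (hne : (spectrum ℝ A).Nonempty)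
    (h : (c • 1 - A).PosSemidef) : lamMax A ≤ c :=
  lamMax_le hne (quad_le_of_psd h)

lemma posDef_smul_one {c : ℝ} (hc : 0 < c) : (c • (1 : Matrix m m ℝ)).PosDef := by
  rw [smul_one_eq_diagonal]
  exact posDef_diagonal_iff.mpr fun i => hc

lemma herm_transpose_eq {C : Matrix m m ℝ} (h : C.IsHermitian) : Cᵀ = C := by
  rw [← conjTranspose_eq_transpose_of_trivial, h.eq]

lemma pd_conj {A Q : Matrix m m ℝ} (hA : A.PosDef) (hQh : Qᵀ = Q) (hQ : IsUnit Q) :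
    (Q * A * Q).PosDef := by
  have hQc : Qᴴ = Q := by rw [conjTranspose_eq_transpose_of_trivial, hQh]
  have hherm : (Q * A * Q).IsHermitian := by
    rw [Matrix.IsHermitian, conjTranspose_mul, conjTranspose_mul, hQc, hA.1.eq, mul_assoc]
  refine .of_dotProduct_mulVec_pos hherm fun x hx => ?_
  have hinj := Matrix.mulVec_injective_iff_isUnit.mpr hQ
  have hQx : Q *ᵥ x ≠ 0 := fun hc => hx (hinj (by rw [hc, mulVec_zero]))
  have hv : x ᵥ* Q = Q *ᵥ x := by rw [← hQh, vecMul_transpose, hQh]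
  have h2 := hA.dotProduct_mulVec_pos hQx
  rw [star_trivial] at h2 ⊢
  rwa [← mulVec_mulVec, ← mulVec_mulVec, dotProduct_mulVec, hv]

lemma sq_psd_le {X : Matrix m m ℝ} (hX : X.PosSemidef) {c : ℝ} (hc : 0 ≤ c)
    (h : (c • 1 - X).PosSemidef) : ((c ^ 2) • 1 - X * X).PosSemidef := by
  obtain ⟨R, hR1, hRX⟩ : ∃ R : Matrix m m ℝ, Rᴴ = R ∧ R * R = X :=
    ⟨psdSqrt hX, (psdSqrt_psd hX).1, psdSqrt_mul_self hX⟩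
  have h1 : (c • (c • 1 - X)).PosSemidef := psd_smul h hc
  have h2 := h.mul_mul_conjTranspose_same R
  rw [hR1] at h2
  have hc1 : R * (c • 1) * R = c • X := by
    rw [Matrix.mul_smul, Matrix.mul_one, Matrix.smul_mul, hRX]
  have hX2 : R * X * R = X * X := by
    rw [← hRX]
    simp only [mul_assoc]
  have key : (c ^ 2) • 1 - X * X = c • (c • 1 - X) + R * (c • 1 - X) * R := by
    rw [Matrix.mul_sub, Matrix.sub_mul, hc1, hX2, smul_sub, smul_smul, pow_two]
    abel
  rw [key]
  exact h1.add h2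

lemma sub_kron {l : Type*} [Fintype l] [DecidableEq l]
    (X Y : Matrix l l ℝ) (Z : Matrix m m ℝ) : (X - Y) ⊗ₖ Z = X ⊗ₖ Z - Y ⊗ₖ Z := by
  ext ⟨i, j⟩ ⟨k, r⟩
  simp [kroneckerMap_apply, sub_mul]

lemma kron_sub {l : Type*} [Fintype l] [DecidableEq l]
    (X : Matrix l l ℝ) (Y Z : Matrix m m ℝ) : X ⊗ₖ (Y - Z) = X ⊗ₖ Y - X ⊗ₖ Z := by
  ext ⟨i, j⟩ ⟨k, r⟩
  simp [kroneckerMap_apply, mul_sub]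

lemma kron_upper {l : Type*} [Fintype l] [DecidableEq l]
    {X : Matrix l l ℝ} {Y : Matrix m m ℝ} (hY : Y.PosSemidef) {a b : ℝ} (ha : 0 ≤ a)
    (hXa : (a • 1 - X).PosSemidef) (hYb : (b • 1 - Y).PosSemidef) :
    ((a * b) • (1 : Matrix (l × m) (l × m) ℝ) - X ⊗ₖ Y).PosSemidef := by
  have h1 : ((a • 1 - X) ⊗ₖ Y).PosSemidef := psd_kron hXa hY
  have h2 : ((a • (1 : Matrix l l ℝ)) ⊗ₖ (b • 1 - Y)).PosSemidef :=
    psd_kron (psd_smul Matrix.PosSemidef.one ha) hYb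
  have key : (a * b) • (1 : Matrix (l × m) (l × m) ℝ) - X ⊗ₖ Y
      = (a • 1 - X) ⊗ₖ Y + (a • (1 : Matrix l l ℝ)) ⊗ₖ (b • 1 - Y) := by
    rw [sub_kron, kron_sub, smul_kronecker, smul_kronecker, kronecker_smul, smul_smul,
      one_kronecker_one]
    abel
  rw [key]
  exact h1.add h2

lemma kron_lower {l : Type*} [Fintype l] [DecidableEq l]
    {X : Matrix l l ℝ} {Y : Matrix m m ℝ} (hY : Y.PosSemidef) {a b : ℝ} (ha : 0 ≤ a)
    (hXa : (X - a • 1).PosSemidef) (hYb : (Y - b • 1).PosSemidef) :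
    (X ⊗ₖ Y - (a * b) • (1 : Matrix (l × m) (l × m) ℝ)).PosSemidef := by
  have h1 : ((X - a • 1) ⊗ₖ Y).PosSemidef := psd_kron hXa hY
  have h2 : ((a • (1 : Matrix l l ℝ)) ⊗ₖ (Y - b • 1)).PosSemidef :=
    psd_kron (psd_smul Matrix.PosSemidef.one ha) hYb
  have key : X ⊗ₖ Y - (a * b) • (1 : Matrix (l × m) (l × m) ℝ)
      = (X - a • 1) ⊗ₖ Y + (a • (1 : Matrix l l ℝ)) ⊗ₖ (Y - b • 1) := by
    rw [sub_kron, kron_sub, smul_kronecker, smul_kronecker, kronecker_smul, smul_smul,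
      one_kronecker_one]
    abel
  rw [key]
  exact h1.add h2

lemma dot_mul_self {C : Matrix m m ℝ} (x : m → ℝ) :
    (C *ᵥ x) ⬝ᵥ (C *ᵥ x) = x ⬝ᵥ ((Cᵀ * C) *ᵥ x) := by
  rw [dotProduct_mulVec, dotProduct_mulVec, ← vecMul_vecMul, vecMul_transpose]

lemma dot_self_nonneg (x : m → ℝ) : 0 ≤ x ⬝ᵥ x :=
  Finset.sum_nonneg fun i _ => mul_self_nonneg _

lemma dot_cs (u v : m → ℝ) : (u ⬝ᵥ v) ^ 2 ≤ (u ⬝ᵥ u) * (v ⬝ᵥ v) := by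
  have := Finset.sum_mul_sq_le_sq_mul_sq Finset.univ u v
  simpa [dotProduct, pow_two] using this

end Helpers

theorem stmt3 (s n : ℕ) (hs : 1 ≤ s) (hn : 1 ≤ n)
    (Γ : Matrix (Fin s) (Fin s) ℝ) (hΓ : 0 ≤ lamMin ((1 / 2 : ℝ) • (Γ + Γᵀ)))
    (M A P : Matrix (Fin n) (Fin n) ℝ)
    (hM : M.PosDef) (hA : A.PosSemidef) (hP : P.PosDef)
    (Δt : ℝ) (hΔt : 0 ≤ Δt)
    (B : Matrix (Fin s × Fin n) (Fin s × Fin n) ℝ)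
    (hB : B = ((1 : Matrix (Fin s) (Fin s) ℝ) ⊗ₖ hP.invSqrt) *
        ((1 : Matrix (Fin s) (Fin s) ℝ) ⊗ₖ M + Δt • (Γ ⊗ₖ A)) *
        ((1 : Matrix (Fin s) (Fin s) ℝ) ⊗ₖ hP.invSqrt)) :
    ((1 / 2 : ℝ) • (B + Bᵀ)).PosDef ∧
    ktilde B ≤
      (lamMax (hP.invSqrt * M * hP.invSqrt)
          + Δt * sigmaMax Γ * lamMax (hP.invSqrt * A * hP.invSqrt)) /
      (lamMin (hP.invSqrt * M * hP.invSqrt)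
          + Δt * lamMin ((1 / 2 : ℝ) • (Γ + Γᵀ)) * lamMin (hP.invSqrt * A * hP.invSqrt)) := by
  have hsne : Nonempty (Fin s) := Fin.pos_iff_nonempty.mp hs
  have hnne : Nonempty (Fin n) := Fin.pos_iff_nonempty.mp hn
  set Q := hP.invSqrt with hQdef
  have hRpsd : (psdSqrt hP.posSemidef).PosSemidef := psdSqrt_psd hP.posSemidef
  have hRu : IsUnit (psdSqrt hP.posSemidef) := by
    have hdet : (psdSqrt hP.posSemidef).det * (psdSqrt hP.posSemidef).det = P.det := by
      rw [← det_mul, psdSqrt_mul_self]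
    have hne : (psdSqrt hP.posSemidef).det ≠ 0 := by
      intro h0
      rw [h0, mul_zero] at hdet
      exact hP.det_pos.ne' hdet.symm
    exact (Matrix.isUnit_iff_isUnit_det _).mpr hne.isUnit
  have hQu : IsUnit Q := by
    rw [hQdef, Matrix.PosDef.invSqrt]
    exact Matrix.isUnit_nonsing_inv_iff.mpr hRu
  have hQh : Q.IsHermitian := hRpsd.1.inv
  have hQt : Qᵀ = Q := herm_transpose_eq hQh
  set M' := Q * M * Q with hM'def
  set A' := Q * A * Q with hA'def
  have hM'pd : M'.PosDef := pd_conj hM hQt hQu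
  have hM't : M'ᵀ = M' := herm_transpose_eq hM'pd.1
  have hA'psd : A'.PosSemidef := by
    have h2 := hA.conjTranspose_mul_mul_same Q
    rwa [conjTranspose_eq_transpose_of_trivial, hQt] at h2
  have hA't : A'ᵀ = A' := herm_transpose_eq hA'psd.1
  set Γs := (1 / 2 : ℝ) • (Γ + Γᵀ) with hΓsdef
  have hΓsh : Γs.IsHermitian := by
    rw [Matrix.IsHermitian, hΓsdef, conjTranspose_smul, conjTranspose_add,
      conjTranspose_eq_transpose_of_trivial, conjTranspose_eq_transpose_of_trivial,
      transpose_transpose, star_trivial, add_comm]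
  -- decomposition of B
  have e1 : ((1 : Matrix (Fin s) (Fin s) ℝ) ⊗ₖ Q) * ((1 : Matrix (Fin s) (Fin s) ℝ) ⊗ₖ M) *
      ((1 : Matrix (Fin s) (Fin s) ℝ) ⊗ₖ Q) = (1 : Matrix (Fin s) (Fin s) ℝ) ⊗ₖ M' := by
    simp only [← mul_kronecker_mul, Matrix.one_mul, Matrix.mul_one]
    rfl
  have e2 : ((1 : Matrix (Fin s) (Fin s) ℝ) ⊗ₖ Q) * (Δt • (Γ ⊗ₖ A)) *
      ((1 : Matrix (Fin s) (Fin s) ℝ) ⊗ₖ Q) = Δt • (Γ ⊗ₖ A') := by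
    rw [Matrix.mul_smul, Matrix.smul_mul]
    simp only [← mul_kronecker_mul, Matrix.one_mul, Matrix.mul_one]
    rfl
  have hBeq : B = (1 : Matrix (Fin s) (Fin s) ℝ) ⊗ₖ M' + Δt • (Γ ⊗ₖ A') := by
    rw [hB, Matrix.mul_add, Matrix.add_mul, e1, e2]
  have hBt : Bᵀ = (1 : Matrix (Fin s) (Fin s) ℝ) ⊗ₖ M' + Δt • (Γᵀ ⊗ₖ A') := by
    rw [hBeq, transpose_add, transpose_smul, ← kroneckerMap_transpose,
      ← kroneckerMap_transpose, transpose_one, hM't, hA't]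
  have hSeq : (1 / 2 : ℝ) • (B + Bᵀ)
      = (1 : Matrix (Fin s) (Fin s) ℝ) ⊗ₖ M' + Δt • (Γs ⊗ₖ A') := by
    rw [hBt, hBeq, hΓsdef, smul_kronecker, add_kronecker]
    module
  -- Γs is PSD
  have hγ : 0 ≤ lamMin Γs := hΓ
  -- denominator bound
  have hmm : 0 < lamMin M' := lamMin_pos hM'pd
  have haa : 0 ≤ lamMin A' := lamMin_nonneg hA'psd
  have hD : 0 < lamMin M' + Δt * lamMin Γs * lamMin A' :=
    add_pos_of_pos_of_nonneg hmm (mul_nonneg (mul_nonneg hΔt hγ) haa)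
  have hkron_low := kron_lower hA'psd hγ (sub_lamMin_psd hΓsh) (sub_lamMin_psd hA'psd.1)
  have h1M := psd_kron (Matrix.PosSemidef.one (n := Fin s)) (sub_lamMin_psd hM'pd.1)
  have hSsub : ((1 / 2 : ℝ) • (B + Bᵀ)
      - (lamMin M' + Δt * lamMin Γs * lamMin A') • 1).PosSemidef := by
    have hsum := h1M.add (psd_smul hkron_low hΔt)
    have key : (1 / 2 : ℝ) • (B + Bᵀ) - (lamMin M' + Δt * lamMin Γs * lamMin A') • 1 =
        (1 : Matrix (Fin s) (Fin s) ℝ) ⊗ₖ (M' - lamMin M' • 1) +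
        Δt • (Γs ⊗ₖ A' - (lamMin Γs * lamMin A') • 1) := by
      rw [hSeq, kron_sub, kronecker_smul, one_kronecker_one]
      module
    rw [key]
    exact hsum
  have hSpd : ((1 / 2 : ℝ) • (B + Bᵀ)).PosDef := by
    have h4 := (posDef_smul_one hD).add_posSemidef hSsub
    rwa [add_sub_cancel] at h4
  have hlamS := lamMin_ge_of_psd (spectrum_nonempty hSpd.1) hSsub
  -- numerator bound
  have hm2 : 0 ≤ lamMax M' := lamMax_nonneg hM'pd.posSemidef
  have ha2 : 0 ≤ lamMax A' := lamMax_nonneg hA'psd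
  have hsg : 0 ≤ sigmaMax Γ := Real.sqrt_nonneg _
  have hGpsd : (Γᵀ * Γ).PosSemidef := by
    have h5 := posSemidef_conjTranspose_mul_self Γ
    rwa [conjTranspose_eq_transpose_of_trivial] at h5
  have hGmax : sigmaMax Γ ^ 2 = lamMax (Γᵀ * Γ) := Real.sq_sqrt (lamMax_nonneg hGpsd)
  have hGsq : ((sigmaMax Γ ^ 2) • 1 - Γᵀ * Γ).PosSemidef := by
    rw [hGmax]
    exact lamMax_sub_psd hGpsd.1
  have hMsq := sq_psd_le hM'pd.posSemidef hm2 (lamMax_sub_psd hM'pd.1)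
  have hAsq := sq_psd_le hA'psd ha2 (lamMax_sub_psd hA'psd.1)
  have hA2psd : (A' * A').PosSemidef := by
    have h6 := posSemidef_conjTranspose_mul_self A'
    rwa [conjTranspose_eq_transpose_of_trivial, hA't] at h6
  have hK2 := kron_upper hA2psd (sq_nonneg (sigmaMax Γ)) hGsq hAsq
  have hT1 : ((1 : Matrix (Fin s) (Fin s) ℝ) ⊗ₖ M')ᵀ * ((1 : Matrix (Fin s) (Fin s) ℝ) ⊗ₖ M')
      = (1 : Matrix (Fin s) (Fin s) ℝ) ⊗ₖ (M' * M') := by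
    rw [← kroneckerMap_transpose, transpose_one, hM't, ← mul_kronecker_mul, Matrix.one_mul]
  have hT2 : (Γ ⊗ₖ A')ᵀ * (Γ ⊗ₖ A') = (Γᵀ * Γ) ⊗ₖ (A' * A') := by
    rw [← kroneckerMap_transpose, hA't, ← mul_kronecker_mul]
  have hK1full : ((lamMax M' ^ 2) • 1
      - ((1 : Matrix (Fin s) (Fin s) ℝ) ⊗ₖ M')ᵀ * ((1 : Matrix (Fin s) (Fin s) ℝ) ⊗ₖ M')).PosSemidef := by
    rw [hT1]
    have h7 := psd_kron (Matrix.PosSemidef.one (n := Fin s)) hMsq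
    rwa [kron_sub, kronecker_smul, one_kronecker_one] at h7
  have hK2full : ((sigmaMax Γ ^ 2 * lamMax A' ^ 2) • 1
      - (Γ ⊗ₖ A')ᵀ * (Γ ⊗ₖ A')).PosSemidef := by
    rw [hT2]
    exact hK2
  set N := lamMax M' + Δt * sigmaMax Γ * lamMax A' with hNdef
  have hN : 0 ≤ N := add_nonneg hm2 (mul_nonneg (mul_nonneg hΔt hsg) ha2)
  have hBB : (Bᵀ * B).IsHermitian := by
    have h8 := isHermitian_conjTranspose_mul_self B
    rwa [conjTranspose_eq_transpose_of_trivial] at h8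
  have hlamBB : lamMax (Bᵀ * B) ≤ N ^ 2 := by
    apply lamMax_le (spectrum_nonempty hBB)
    intro x
    have hx0 : 0 ≤ x ⬝ᵥ x := dot_self_nonneg x
    set u := ((1 : Matrix (Fin s) (Fin s) ℝ) ⊗ₖ M') *ᵥ x with hudef
    set v := (Γ ⊗ₖ A') *ᵥ x with hvdef
    have hq : x ⬝ᵥ ((Bᵀ * B) *ᵥ x) = (B *ᵥ x) ⬝ᵥ (B *ᵥ x) := (dot_mul_self x).symm
    have hBx : B *ᵥ x = u + Δt • v := by rw [hBeq, add_mulVec, smul_mulVec]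
    have huu : u ⬝ᵥ u ≤ lamMax M' ^ 2 * (x ⬝ᵥ x) := by
      rw [hudef, dot_mul_self]
      exact quad_le_of_psd hK1full x
    have hvv : v ⬝ᵥ v ≤ sigmaMax Γ ^ 2 * lamMax A' ^ 2 * (x ⬝ᵥ x) := by
      rw [hvdef, dot_mul_self]
      exact quad_le_of_psd hK2full x
    have hcs := dot_cs u v
    have huu0 : 0 ≤ u ⬝ᵥ u := dot_self_nonneg u
    have hvv0 : 0 ≤ v ⬝ᵥ v := dot_self_nonneg v
    have hmct : 0 ≤ lamMax M' * (sigmaMax Γ * lamMax A') * (x ⬝ᵥ x) :=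
      mul_nonneg (mul_nonneg hm2 (mul_nonneg hsg ha2)) hx0
    have huv : u ⬝ᵥ v ≤ lamMax M' * (sigmaMax Γ * lamMax A') * (x ⬝ᵥ x) := by
      have ha : u ⬝ᵥ u * (v ⬝ᵥ v) ≤ (lamMax M' ^ 2 * (x ⬝ᵥ x)) *
          (sigmaMax Γ ^ 2 * lamMax A' ^ 2 * (x ⬝ᵥ x)) :=
        mul_le_mul huu hvv hvv0 (mul_nonneg (sq_nonneg _) hx0)
      have hb : (u ⬝ᵥ v) ^ 2 ≤ (lamMax M' * (sigmaMax Γ * lamMax A') * (x ⬝ᵥ x)) ^ 2 := by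
        calc (u ⬝ᵥ v) ^ 2 ≤ u ⬝ᵥ u * (v ⬝ᵥ v) := hcs
          _ ≤ (lamMax M' ^ 2 * (x ⬝ᵥ x)) * (sigmaMax Γ ^ 2 * lamMax A' ^ 2 * (x ⬝ᵥ x)) := ha
          _ = (lamMax M' * (sigmaMax Γ * lamMax A') * (x ⬝ᵥ x)) ^ 2 := by ring
      have hc := Real.sqrt_le_sqrt hb
      rw [Real.sqrt_sq_eq_abs, Real.sqrt_sq hmct] at hc
      exact le_trans (le_abs_self _) hc
    rw [hq, hBx]
    simp only [dotProduct_add, add_dotProduct, dotProduct_smul, smul_dotProduct, smul_eq_mul]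
    have hdc : v ⬝ᵥ u = u ⬝ᵥ v := dotProduct_comm v u
    rw [hNdef, hdc]
    have s1 : Δt * (u ⬝ᵥ v) ≤ Δt * (lamMax M' * (sigmaMax Γ * lamMax A') * (x ⬝ᵥ x)) :=
      mul_le_mul_of_nonneg_left huv hΔt
    have s2 : Δt * (Δt * (v ⬝ᵥ v)) ≤ Δt * (Δt * (sigmaMax Γ ^ 2 * lamMax A' ^ 2 * (x ⬝ᵥ x))) :=
      mul_le_mul_of_nonneg_left (mul_le_mul_of_nonneg_left hvv hΔt) hΔt
    have hrhs : (lamMax M' + Δt * sigmaMax Γ * lamMax A') ^ 2 * (x ⬝ᵥ x)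
        = lamMax M' ^ 2 * (x ⬝ᵥ x) + 2 * (Δt * (lamMax M' * (sigmaMax Γ * lamMax A') * (x ⬝ᵥ x)))
          + Δt * (Δt * (sigmaMax Γ ^ 2 * lamMax A' ^ 2 * (x ⬝ᵥ x))) := by ring
    rw [hrhs]
    linarith [huu, s1, s2]
  have hsig : sigmaMax B ≤ N := by
    have h9 := Real.sqrt_le_sqrt hlamBB
    rwa [Real.sqrt_sq hN] at h9
  refine ⟨hSpd, ?_⟩
  show sigmaMax B / lamMin ((1 / 2 : ℝ) • (B + Bᵀ)) ≤ _
  exact div_le_div₀ hN hsig hD hlamS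
end

section
/- Let I be a nonempty finite index set, let w_i ≥ 0 be nonnegative weights not all zero, and let x_i > 0 be positive reals for i ∈ I. Set S = Σ_i w_i·x_i, assume S > 0, and set ψ = (max_i x_i)/S. Then the infimum over q ∈ (2, ∞) of q·(Σ_i w_i·x_i^{q/(q−2)})^{(q−2)/q} is at most 2e·(1 + |ln ψ|)·S. -/
open BigOperators

theorem stmt14 {ι : Type*} [Fintype ι] [Nonempty ι] (w x : ι → ℝ)
    (hw : ∀ i, 0 ≤ w i) (hw' : ∃ i, w i ≠ 0) (hx : ∀ i, 0 < x i)
    (S : ℝ) (hS : S = ∑ i, w i * x i) (hSpos : 0 < S)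
    (ψ : ℝ) (hψ : ψ = (⨆ i, x i) / S) :
    sInf ((fun q : ℝ => q * (∑ i, w i * x i ^ (q / (q - 2))) ^ ((q - 2) / q)) '' Set.Ioi 2)
      ≤ 2 * Real.exp 1 * (1 + |Real.log ψ|) * S := by
  set a := |Real.log ψ| with hadef
  have ha : 0 ≤ a := abs_nonneg _
  set q : ℝ := 3 + 2 * a with hqdef
  have hq2 : (2:ℝ) < q := by rw [hqdef]; linarith
  have hqpos : (0:ℝ) < q := by linarith
  have hq2pos : (0:ℝ) < q - 2 := by linarith
  -- sup facts
  have hbdd : BddAbove (Set.range x) := Set.Finite.bddAbove (Set.finite_range x)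
  have hM : ∀ i, x i ≤ ⨆ i, x i := fun i => le_ciSup hbdd i
  obtain ⟨i0⟩ := ‹Nonempty ι›
  have hMpos : 0 < ⨆ i, x i := lt_of_lt_of_le (hx i0) (hM i0)
  set M := ⨆ i, x i with hMdef
  have hψpos : 0 < ψ := by rw [hψ]; positivity
  have hMS : M = ψ * S := by rw [hψ]; field_simp
  have hexp : q / (q - 2) = 1 + 2 / (q - 2) := by field_simp; ring
  -- bound the sum
  have hsum : ∑ i, w i * x i ^ (q / (q - 2)) ≤ M ^ (2 / (q - 2)) * S := by
    rw [hS, Finset.mul_sum]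
    apply Finset.sum_le_sum
    intro i _
    have hxi : x i ^ (q / (q - 2)) = x i ^ (2 / (q - 2)) * x i := by
      rw [hexp, Real.rpow_add (hx i), Real.rpow_one]; ring
    rw [hxi]
    have h1 : x i ^ (2 / (q - 2)) ≤ M ^ (2 / (q - 2)) :=
      Real.rpow_le_rpow (hx i).le (hM i) (by positivity)
    have h2 : 0 ≤ w i * x i := mul_nonneg (hw i) (hx i).le
    nlinarith [mul_le_mul_of_nonneg_left h1 h2]
  have hsumnn : 0 ≤ ∑ i, w i * x i ^ (q / (q - 2)) :=
    Finset.sum_nonneg fun i _ => mul_nonneg (hw i) (Real.rpow_nonneg (hx i).le _)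
  have hrw : (∑ i, w i * x i ^ (q / (q - 2))) ^ ((q - 2) / q)
      ≤ ψ ^ (2 / q) * S := by
    have step : (∑ i, w i * x i ^ (q / (q - 2))) ^ ((q - 2) / q)
        ≤ (M ^ (2 / (q - 2)) * S) ^ ((q - 2) / q) :=
      Real.rpow_le_rpow hsumnn hsum (by positivity)
    have hrhs : (M ^ (2 / (q - 2)) * S) ^ ((q - 2) / q) = ψ ^ (2 / q) * S := by
      have e0 : M ^ (2 / (q - 2)) * S = ψ ^ (2 / (q - 2)) * S ^ (q / (q - 2)) := by
        rw [hMS, Real.mul_rpow hψpos.le hSpos.le, hexp, Real.rpow_add hSpos, Real.rpow_one]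
        ring
      rw [e0, Real.mul_rpow (by positivity) (by positivity),
        ← Real.rpow_mul hψpos.le, ← Real.rpow_mul hSpos.le]
      have e1 : 2 / (q - 2) * ((q - 2) / q) = 2 / q := by field_simp
      have e2 : q / (q - 2) * ((q - 2) / q) = 1 := by field_simp
      rw [e1, e2, Real.rpow_one]
    rw [hrhs] at step
    exact step
  -- key numeric inequality
  have hψt : ψ ^ (2 / q) ≤ Real.exp (2 * a / q) := by
    rw [← Real.exp_log hψpos, ← Real.exp_mul]
    apply Real.exp_le_exp.2
    have : Real.log ψ ≤ a := le_abs_self _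
    have h2q : (0:ℝ) ≤ 2 / q := by positivity
    have e3 : 2 * a / q = a * (2 / q) := by ring
    rw [e3]
    exact mul_le_mul_of_nonneg_right this h2q
  have key : q * Real.exp (2 * a / q) ≤ 2 * Real.exp 1 * (1 + a) := by
    have h1 : (3 / q) + 1 ≤ Real.exp (3 / q) := Real.add_one_le_exp _
    have h1' : q + 3 ≤ q * Real.exp (3 / q) := by
      have := mul_le_mul_of_nonneg_left h1 hqpos.le
      calc q + 3 = q * (3 / q + 1) := by field_simp; ring
        _ ≤ q * Real.exp (3 / q) := this
    have h2 : Real.exp (2 * a / q) = Real.exp 1 / Real.exp (3 / q) := by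
      rw [← Real.exp_sub]
      congr 1
      field_simp
      ring
    have hE : (0:ℝ) < Real.exp (3 / q) := Real.exp_pos _
    rw [h2, ← mul_div_assoc, div_le_iff₀ hE]
    have he1 : (0:ℝ) < Real.exp 1 := Real.exp_pos _
    have hfac : 0 ≤ 2 * Real.exp 1 * (1 + a) := by positivity
    nlinarith [mul_le_mul_of_nonneg_left h1' hfac, sq_nonneg a]
  -- combine
  have hmem : q * (∑ i, w i * x i ^ (q / (q - 2))) ^ ((q - 2) / q)
      ∈ (fun q : ℝ => q * (∑ i, w i * x i ^ (q / (q - 2))) ^ ((q - 2) / q)) '' Set.Ioi 2 :=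
    ⟨q, hq2, rfl⟩
  have hle : q * (∑ i, w i * x i ^ (q / (q - 2))) ^ ((q - 2) / q)
      ≤ 2 * Real.exp 1 * (1 + a) * S := by
    calc q * (∑ i, w i * x i ^ (q / (q - 2))) ^ ((q - 2) / q)
        ≤ q * (ψ ^ (2 / q) * S) := by
          apply mul_le_mul_of_nonneg_left hrw hqpos.le
      _ ≤ q * (Real.exp (2 * a / q) * S) := by
          apply mul_le_mul_of_nonneg_left _ hqpos.le
          exact mul_le_mul_of_nonneg_right hψt hSpos.le
      _ = q * Real.exp (2 * a / q) * S := by ring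
      _ ≤ 2 * Real.exp 1 * (1 + a) * S := mul_le_mul_of_nonneg_right key hSpos.le
  have hbb : BddBelow ((fun q : ℝ => q * (∑ i, w i * x i ^ (q / (q - 2))) ^ ((q - 2) / q)) '' Set.Ioi 2) := by
    refine ⟨0, ?_⟩
    rintro y ⟨r, hr, rfl⟩
    have hr0 : (0:ℝ) < r := lt_trans two_pos hr
    have : 0 ≤ (∑ i, w i * x i ^ (r / (r - 2))) ^ ((r - 2) / r) := by
      apply Real.rpow_nonneg
      exact Finset.sum_nonneg fun i _ => mul_nonneg (hw i) (Real.rpow_nonneg (hx i).le _)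
    positivity
  exact le_trans (csInf_le hbb hmem) hle
end
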